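/- Discrete Leibniz rule: for discrete forms φ, ψ on the cochain complex K(4) with matrix coefficients, the coboundary operator satisfies d^c(φ ∪ ψ) = d^c φ ∪ ψ + (-1)^p φ ∪ d^c ψ, where p is the dimension of φ. -/

import Mathlib

open Finset

/-- A basis element of the cochain complex `K(4) = K⊗K⊗K⊗K`: in each of the 4
tensor factors either `x^j` (`false`, index `j`) or `e^j` (`true`, index `j`). -/
abbrev KCell := Fin 4 → Bool × ℤ

/-- A discrete form on `K(4)` with `gl(2,ℂ)`-valued coefficients. -/
abbrev KForm := KCell → Matrix (Fin 2) (Fin 2) ℂ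

/-- The dimension of a basis element of `K(4)`: the number of `e`-factors. -/
def kdim (b : KCell) : ℕ := (univ.filter fun i => (b i).1).card

/-- The set of positions of the 1-dimensional factors `e` in a basis element. -/
def eSet (b : KCell) : Finset (Fin 4) := univ.filter fun i => (b i).1

/-- The left factor of the decomposition of `b` determined by the subset `T` of
`e`-positions coming from the left: `e^{j_i}` at positions in `T`, `x^{j_i}`
elsewhere. -/
def leftOf (b : KCell) (T : Finset (Fin 4)) : KCell :=
  fun i => (decide (i ∈ T), (b i).2)

/-- The right factor of the decomposition of `b` determined by `T`: at a
position `i ∈ T` the rule `e^j ∪ x^{τj} = e^j` forces `x^{j_i + 1}`, at a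
position of `e` not in `T` the rule `x^j ∪ e^j = e^j` forces `e^{j_i}`, and
elsewhere `x^j ∪ x^j = x^j` forces `x^{j_i}`. -/
def rightOf (b : KCell) (T : Finset (Fin 4)) : KCell :=
  fun i => ((b i).1 && decide (i ∉ T), (b i).2 + if i ∈ T then 1 else 0)

/-- The sign coming from iterating the rule
`(s_(p) ⊗ s^j) ∪ (s_(q) ⊗ s^μ) = Q(j,q)(s_(p) ∪ s_(q)) ⊗ (s^j ∪ s^μ)`, where
`Q(j,q) = -1` iff both `s^j` and `s_(q)` are odd-dimensional. -/
def cupSign (b : KCell) (T : Finset (Fin 4)) : ℤ :=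
  (-1) ^ ((univ.filter fun p : Fin 4 × Fin 4 =>
      p.1 < p.2 ∧ p.2 ∈ T ∧ p.1 ∈ eSet b \ T).card)

/-- The cup product of discrete forms on `K(4)`: coefficients multiply as
matrices, and the basis decompositions are governed by the 1-dimensional rules
`x^j ∪ x^j = x^j`, `e^j ∪ x^{τj} = e^j`, `x^j ∪ e^j = e^j` together with the
sign rule `Q`. -/
noncomputable def cup (φ ψ : KForm) : KForm := fun b =>
  ∑ T ∈ (eSet b).powerset,
    (cupSign b T : ℂ) • (φ (leftOf b T) * ψ (rightOf b T))

/-- The coboundary operator `d^c` on `K(4)`, dual to the boundary operator `∂`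
via the pairing: on a basis element it replaces one `e`-factor by the
difference of its endpoint `x`-factors, with the Koszul sign. -/
noncomputable def dc (φ : KForm) : KForm := fun b =>
  ∑ i ∈ eSet b,
    ((-1 : ℂ) ^ (((eSet b).filter fun i' => i' < i).card)) •
      (φ (Function.update b i (false, (b i).2 + 1)) -
       φ (Function.update b i (false, (b i).2)))

/- ## auxiliary definitions and lemmas -/


def Dn (U T : Finset (Fin 4)) : ℕ :=
  (univ.filter fun p : Fin 4 × Fin 4 => p.1 < p.2 ∧ p.2 ∈ T ∧ p.1 ∈ U \ T).card

lemma cupSign_eq (b : KCell) (T : Finset (Fin 4)) :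
    cupSign b T = (-1) ^ Dn (eSet b) T := rfl

lemma sign1' : ∀ (E S : Finset (Fin 4)) (i : Fin 4), i ∈ E → S ⊆ E.erase i →
    ((E.filter fun k => k < i).card + Dn (E.erase i) S) % 2
      = (Dn E (insert i S) + (S.filter fun k => k < i).card) % 2 := by decide

lemma sign2' : ∀ (E S : Finset (Fin 4)) (i : Fin 4), i ∈ E → S ⊆ E.erase i →
    ((E.filter fun k => k < i).card + Dn (E.erase i) S) % 2
      = (S.card + (Dn E S + ((E \ S).filter fun k => k < i).card)) % 2 := by decide

lemma neg_one_pow_congr' {m n : ℕ} (h : m % 2 = n % 2) : ((-1 : ℂ)) ^ m = (-1) ^ n := by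
  conv_lhs => rw [← Nat.div_add_mod m 2]
  conv_rhs => rw [← Nat.div_add_mod n 2]
  rw [h]
  simp [pow_add, pow_mul]

lemma eSet_update_false (b : KCell) (i : Fin 4) (z : ℤ) :
    eSet (Function.update b i (false, z)) = (eSet b).erase i := by
  ext k
  simp only [eSet, mem_filter, mem_univ, true_and, mem_erase, Function.update_apply]
  by_cases h : k = i <;> simp [h]

lemma eSet_leftOf (b : KCell) (T : Finset (Fin 4)) : eSet (leftOf b T) = T := by
  ext k; simp [eSet, leftOf]

lemma eSet_rightOf (b : KCell) (T : Finset (Fin 4)) :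
    eSet (rightOf b T) = eSet b \ T := by
  ext k; simp [eSet, rightOf, mem_sdiff]

lemma kdim_leftOf (b : KCell) (T : Finset (Fin 4)) : kdim (leftOf b T) = T.card := by
  have h := eSet_leftOf b T
  simpa [kdim, eSet] using congrArg Finset.card h

@[simp] lemma leftOf_snd (b : KCell) (T : Finset (Fin 4)) (i : Fin 4) :
    (leftOf b T i).2 = (b i).2 := rfl

def Lp (b : KCell) (i : Fin 4) (S : Finset (Fin 4)) : KCell :=
  leftOf (Function.update b i (false, (b i).2 + 1)) S
def Rp (b : KCell) (i : Fin 4) (S : Finset (Fin 4)) : KCell :=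
  rightOf (Function.update b i (false, (b i).2 + 1)) S
def R0 (b : KCell) (i : Fin 4) (S : Finset (Fin 4)) : KCell :=
  rightOf (Function.update b i (false, (b i).2)) S

lemma cellA (b : KCell) (i : Fin 4) (S : Finset (Fin 4)) (hiS : i ∉ S) :
    Function.update (leftOf b (insert i S)) i (false, (b i).2 + 1) = Lp b i S := by
  funext k
  by_cases h : k = i
  · subst h; simp [Lp, leftOf, hiS]
  · simp [Lp, leftOf, Function.update_apply, h, mem_insert]

lemma cellB (b : KCell) (i : Fin 4) (S : Finset (Fin 4)) (hiS : i ∉ S) :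
    Function.update (leftOf b (insert i S)) i (false, (b i).2) = leftOf b S := by
  funext k
  by_cases h : k = i
  · subst h; simp [leftOf, hiS]
  · simp [leftOf, Function.update_apply, h, mem_insert]

lemma cellF (b : KCell) (i : Fin 4) (S : Finset (Fin 4)) :
    leftOf (Function.update b i (false, (b i).2)) S = leftOf b S := by
  funext k
  by_cases h : k = i
  · subst h; simp [leftOf]
  · simp [leftOf, Function.update_apply, h]

lemma cellC (b : KCell) (i : Fin 4) (S : Finset (Fin 4)) (hiS : i ∉ S) :
    rightOf b (insert i S) = Rp b i S := by
  funext k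
  by_cases h : k = i
  · subst h; simp [Rp, rightOf, hiS]
  · simp [Rp, rightOf, Function.update_apply, h, mem_insert, hiS]

lemma cellD (b : KCell) (i : Fin 4) (S : Finset (Fin 4)) (hiS : i ∉ S) :
    Function.update (rightOf b S) i (false, (b i).2) = R0 b i S := by
  funext k
  by_cases h : k = i
  · subst h; simp [R0, rightOf, hiS]
  · simp [R0, rightOf, Function.update_apply, h]

lemma cellE (b : KCell) (i : Fin 4) (S : Finset (Fin 4)) (hiS : i ∉ S) :
    Function.update (rightOf b S) i (false, (b i).2 + 1) = Rp b i S := by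
  funext k
  by_cases h : k = i
  · subst h; simp [Rp, rightOf, hiS]
  · simp [Rp, rightOf, Function.update_apply, h]

lemma reindex1 {M : Type*} [AddCommMonoid M] (E : Finset (Fin 4))
    (f : Finset (Fin 4) → Fin 4 → M) :
    ∑ T ∈ E.powerset, ∑ i ∈ T, f T i
      = ∑ i ∈ E, ∑ S ∈ (E.erase i).powerset, f (insert i S) i := by
  rw [Finset.sum_comm' (t' := E) (s' := fun i => E.powerset.filter fun T => i ∈ T)]
  · refine Finset.sum_congr rfl fun i hi => ?_
    refine Finset.sum_nbij' (fun T => T.erase i) (fun S => insert i S) ?_ ?_ ?_ ?_ ?_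
    · intro T hT
      simp only [mem_filter, mem_powerset] at hT
      simp only [mem_powerset]
      exact erase_subset_erase i hT.1
    · intro S hS
      simp only [mem_powerset] at hS
      simp only [mem_filter, mem_powerset]
      exact ⟨insert_subset hi (hS.trans (erase_subset i E)), mem_insert_self i S⟩
    · intro T hT
      simp only [mem_filter, mem_powerset] at hT
      exact insert_erase hT.2
    · intro S hS
      simp only [mem_powerset] at hS
      exact erase_insert (fun hiS => (mem_erase.mp (hS hiS)).1 rfl)
    · intro T hT
      simp only [mem_filter, mem_powerset] at hT
      rw [insert_erase hT.2]
  · intro T i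
    simp only [mem_powerset, mem_filter]
    tauto

lemma reindex2 {M : Type*} [AddCommMonoid M] (E : Finset (Fin 4))
    (g : Finset (Fin 4) → Fin 4 → M) :
    ∑ T ∈ E.powerset, ∑ i ∈ E \ T, g T i
      = ∑ i ∈ E, ∑ S ∈ (E.erase i).powerset, g S i := by
  rw [Finset.sum_comm' (t' := E) (s' := fun i => (E.erase i).powerset)]
  intro T i
  simp only [mem_powerset, mem_sdiff, subset_erase]
  tauto

/-- Discrete Leibniz rule: for discrete forms `φ, ψ` on `K(4)` with matrix
coefficients, `d^c(φ ∪ ψ) = d^cφ ∪ ψ + (-1)^p φ ∪ d^cψ`, where `p` is the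
dimension of `φ`. -/
theorem dc_cup_leibniz (p : ℕ) (φ ψ : KForm)
    (hφ : ∀ b : KCell, kdim b ≠ p → φ b = 0) :
    dc (cup φ ψ) = cup (dc φ) ψ + ((-1 : ℂ) ^ p) • cup φ (dc ψ) := by
  funext b
  simp only [Pi.add_apply, Pi.smul_apply]
  have hLHS :
      dc (cup φ ψ) b
        = ∑ i ∈ eSet b, ∑ S ∈ ((eSet b).erase i).powerset,
            ((-1 : ℂ) ^ (((eSet b).filter fun k => k < i).card + Dn ((eSet b).erase i) S)) •
              (φ (Lp b i S) * ψ (Rp b i S) - φ (leftOf b S) * ψ (R0 b i S)) := by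
    simp only [dc, cup]
    refine Finset.sum_congr rfl fun i hi => ?_
    simp only [eSet_update_false, cupSign_eq, cellF, Int.cast_pow, Int.cast_neg, Int.cast_one]
    rw [← Finset.sum_sub_distrib, Finset.smul_sum]
    refine Finset.sum_congr rfl fun S hS => ?_
    rw [← smul_sub, smul_smul, ← pow_add]
    rfl
  have hRHS1 :
      cup (dc φ) ψ b
        = ∑ i ∈ eSet b, ∑ S ∈ ((eSet b).erase i).powerset,
            ((-1 : ℂ) ^ (Dn (eSet b) (insert i S) + (S.filter fun k => k < i).card)) •
              ((φ (Lp b i S) - φ (leftOf b S)) * ψ (Rp b i S)) := by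
    have step1 :
        cup (dc φ) ψ b
          = ∑ T ∈ (eSet b).powerset, ∑ i ∈ T,
              ((-1 : ℂ) ^ (Dn (eSet b) T + (T.filter fun k => k < i).card)) •
                ((φ (Function.update (leftOf b T) i (false, (b i).2 + 1)) -
                  φ (Function.update (leftOf b T) i (false, (b i).2))) * ψ (rightOf b T)) := by
      simp only [cup, dc, eSet_leftOf, cupSign_eq, leftOf_snd,
        Int.cast_pow, Int.cast_neg, Int.cast_one]
      refine Finset.sum_congr rfl fun T hT => ?_
      rw [Finset.sum_mul, Finset.smul_sum]
      refine Finset.sum_congr rfl fun i hi => ?_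
      rw [smul_mul_assoc, smul_smul, ← pow_add]
    rw [step1, reindex1]
    refine Finset.sum_congr rfl fun i hi => Finset.sum_congr rfl fun S hS => ?_
    rw [mem_powerset] at hS
    have hiS : i ∉ S := fun h => (mem_erase.mp (hS h)).1 rfl
    rw [cellA b i S hiS, cellB b i S hiS, cellC b i S hiS,
      filter_insert, if_neg (lt_irrefl i)]
  have hRHS2 :
      ((-1 : ℂ) ^ p) • cup φ (dc ψ) b
        = ∑ i ∈ eSet b, ∑ S ∈ ((eSet b).erase i).powerset,
            ((-1 : ℂ) ^ (S.card + (Dn (eSet b) S + (((eSet b) \ S).filter fun k => k < i).card))) •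
              (φ (leftOf b S) * (ψ (Rp b i S) - ψ (R0 b i S))) := by
    have key : ∀ (T : Finset (Fin 4)) (X : Matrix (Fin 2) (Fin 2) ℂ) (c : ℂ),
        ((-1 : ℂ) ^ p * c) • (φ (leftOf b T) * X)
          = ((-1 : ℂ) ^ T.card * c) • (φ (leftOf b T) * X) := by
      intro T X c
      by_cases h : T.card = p
      · rw [h]
      · have h0 : φ (leftOf b T) = 0 := hφ _ (by rw [kdim_leftOf]; exact h)
        rw [h0, zero_mul, smul_zero, smul_zero]
    have step1 :
        ((-1 : ℂ) ^ p) • cup φ (dc ψ) b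
          = ∑ T ∈ (eSet b).powerset, ∑ i ∈ (eSet b) \ T,
              ((-1 : ℂ) ^ (T.card + (Dn (eSet b) T + (((eSet b) \ T).filter fun k => k < i).card))) •
                (φ (leftOf b T) * (ψ (Function.update (rightOf b T) i (false, ((rightOf b T) i).2 + 1)) -
                  ψ (Function.update (rightOf b T) i (false, ((rightOf b T) i).2)))) := by
      simp only [cup, dc, eSet_rightOf, cupSign_eq, Int.cast_pow, Int.cast_neg, Int.cast_one]
      rw [Finset.smul_sum]
      refine Finset.sum_congr rfl fun T hT => ?_
      rw [Finset.mul_sum, Finset.smul_sum, Finset.smul_sum]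
      refine Finset.sum_congr rfl fun i hi => ?_
      rw [mul_smul_comm, smul_smul, smul_smul, mul_assoc, ← pow_add, key, ← pow_add]
    rw [step1, reindex2]
    refine Finset.sum_congr rfl fun i hi => Finset.sum_congr rfl fun S hS => ?_
    rw [mem_powerset] at hS
    have hiS : i ∉ S := fun h => (mem_erase.mp (hS h)).1 rfl
    have h2 : ((rightOf b S) i).2 = (b i).2 := by simp [rightOf, hiS]
    rw [h2, cellD b i S hiS, cellE b i S hiS]
  rw [hLHS, hRHS1, hRHS2, ← Finset.sum_add_distrib]
  refine Finset.sum_congr rfl fun i hi => ?_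
  rw [← Finset.sum_add_distrib]
  refine Finset.sum_congr rfl fun S hS => ?_
  rw [mem_powerset] at hS
  rw [← neg_one_pow_congr' (sign1' (eSet b) S i hi hS),
    ← neg_one_pow_congr' (sign2' (eSet b) S i hi hS), ← smul_add]
  congr 1
  rw [sub_mul, mul_sub]
  abel
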